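/- The sigma matrices satisfy σ^{μν} σ^{λρ} σ_{μν} = −4 σ^{λρ} for all λ, ρ ∈ {0,1,2,3}, where the sum runs over both repeated indices μ, ν from 0 to 3. -/
import Mathlib


open Matrix

/-- The Minkowski metric `g = diag(+1, -1, -1, -1)` (as complex numbers). -/
noncomputable def minkowski (μ ν : Fin 4) : ℂ :=
  if μ = ν then (if μ = 0 then 1 else -1) else 0

/-- A family `γ^0, γ^1, γ^2, γ^3` of 4×4 complex matrices is a set of Dirac matrices if it
satisfies the anticommutation relations `γ^μ γ^ν + γ^ν γ^μ = 2 g^{μν} I` and the hermiticity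
condition `(γ^μ)† = γ^0 γ^μ γ^0`. -/
def IsDiracFamily (γ : Fin 4 → Matrix (Fin 4) (Fin 4) ℂ) : Prop :=
  (∀ μ ν, γ μ * γ ν + γ ν * γ μ = (2 * minkowski μ ν) • (1 : Matrix (Fin 4) (Fin 4) ℂ)) ∧
  (∀ μ, (γ μ)ᴴ = γ 0 * γ μ * γ 0)

/-- The gamma matrices with lowered index: `γ_μ = g_{μν} γ^ν` (sum over `ν`). -/
noncomputable def lowerGamma (γ : Fin 4 → Matrix (Fin 4) (Fin 4) ℂ) (μ : Fin 4) :
    Matrix (Fin 4) (Fin 4) ℂ :=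
  ∑ ν, minkowski μ ν • γ ν

/-- The sigma matrices `σ^{μν} = (i/2)(γ^μ γ^ν - γ^ν γ^μ)`. -/
noncomputable def sigmaUp (γ : Fin 4 → Matrix (Fin 4) (Fin 4) ℂ) (μ ν : Fin 4) :
    Matrix (Fin 4) (Fin 4) ℂ :=
  (Complex.I / 2) • (γ μ * γ ν - γ ν * γ μ)

/-- The sigma matrices with both indices lowered: `σ_{μν} = g_{μα} g_{νβ} σ^{αβ}`. -/
noncomputable def sigmaLow (γ : Fin 4 → Matrix (Fin 4) (Fin 4) ℂ) (μ ν : Fin 4) :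
    Matrix (Fin 4) (Fin 4) ℂ :=
  ∑ α, ∑ β, (minkowski μ α * minkowski ν β) • sigmaUp γ α β

/-- `γ_5 = i γ^0 γ^1 γ^2 γ^3`. -/
noncomputable def gammaFive (γ : Fin 4 → Matrix (Fin 4) (Fin 4) ℂ) :
    Matrix (Fin 4) (Fin 4) ℂ :=
  Complex.I • (γ 0 * γ 1 * γ 2 * γ 3)

theorem Hdelta' (a : Fin 4) (M : Fin 4 → Matrix (Fin 4) (Fin 4) ℂ) :
    ∑ μ, minkowski a μ • M μ = minkowski a a • M a := by
  rw [Finset.sum_eq_single a]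
  · intro b _ hb
    rw [show minkowski a b = 0 from if_neg (fun h => hb h.symm), zero_smul]
  · intro h; exact absurd (Finset.mem_univ a) h

theorem Llow' (γ : Fin 4 → Matrix (Fin 4) (Fin 4) ℂ) (μ ν : Fin 4) :
    sigmaLow γ μ ν = (minkowski μ μ * minkowski ν ν) • sigmaUp γ μ ν := by
  rw [sigmaLow]
  have h1 : ∀ α, ∑ β, (minkowski μ α * minkowski ν β) • sigmaUp γ α β
      = minkowski ν ν • (minkowski μ α • sigmaUp γ α ν) := by
    intro α
    rw [← Hdelta' ν (fun β => minkowski μ α • sigmaUp γ α β)]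
    apply Finset.sum_congr rfl
    intro β _
    rw [mul_comm, mul_smul]
  simp only [h1]
  rw [← Finset.smul_sum, Hdelta' μ (fun α => sigmaUp γ α ν), smul_smul, mul_comm]

set_option maxHeartbeats 4000000 in
/-- `σ^{μν} σ^{λρ} σ_{μν} = -4 σ^{λρ}` (sum over the repeated indices `μ, ν`). -/
theorem sigma_sigma_sigma_contraction (γ : Fin 4 → Matrix (Fin 4) (Fin 4) ℂ)
    (hγ : IsDiracFamily γ) :
    ∀ lam ρ, ∑ μ, ∑ ν, sigmaUp γ μ ν * sigmaUp γ lam ρ * sigmaLow γ μ ν =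
      (-4 : ℂ) • sigmaUp γ lam ρ := by
  obtain ⟨hcomm, -⟩ := hγ
  have hsq : ∀ μ, γ μ * γ μ = minkowski μ μ • 1 := by
    intro μ
    have h := hcomm μ μ
    rw [← two_smul ℂ] at h
    have h2 := congrArg (fun M => ((2:ℂ)⁻¹) • M) h
    simpa [smul_smul, ← mul_assoc] using h2
  have hswap : ∀ μ ν, μ ≠ ν → γ ν * γ μ = -(γ μ * γ ν) := by
    intro μ ν h
    have h2 := hcomm μ ν
    have hz : minkowski μ ν = 0 := by simp [minkowski, h]
    rw [hz] at h2
    simp only [mul_zero, zero_smul] at h2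
    exact eq_neg_of_add_eq_zero_right h2
  have hswap' : ∀ (μ ν : Fin 4) (x), μ ≠ ν → γ ν * (γ μ * x) = -(γ μ * (γ ν * x)) := by
    intro μ ν x h
    rw [← mul_assoc, hswap μ ν h, neg_mul, mul_assoc]
  have hsq' : ∀ (μ : Fin 4) (x), γ μ * (γ μ * x) = minkowski μ μ • x := by
    intro μ x
    rw [← mul_assoc, hsq, smul_mul_assoc, one_mul]
  have q0 : ∀ x, γ 0 * (γ 0 * x) = x := by intro x; rw [hsq']; simp [minkowski]
  have q1 : ∀ x, γ 1 * (γ 1 * x) = -x := by intro x; rw [hsq']; simp [minkowski]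
  have q2 : ∀ x, γ 2 * (γ 2 * x) = -x := by intro x; rw [hsq']; simp [minkowski]
  have q3 : ∀ x, γ 3 * (γ 3 * x) = -x := by intro x; rw [hsq']; simp [minkowski]
  have q0' : γ 0 * γ 0 = 1 := by rw [hsq]; simp [minkowski]
  have q1' : γ 1 * γ 1 = -1 := by rw [hsq]; simp [minkowski]
  have q2' : γ 2 * γ 2 = -1 := by rw [hsq]; simp [minkowski]
  have q3' : γ 3 * γ 3 = -1 := by rw [hsq]; simp [minkowski]
  have w10 : ∀ x, γ 1 * (γ 0 * x) = -(γ 0 * (γ 1 * x)) := fun x => hswap' 0 1 x (by decide)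
  have w20 : ∀ x, γ 2 * (γ 0 * x) = -(γ 0 * (γ 2 * x)) := fun x => hswap' 0 2 x (by decide)
  have w21 : ∀ x, γ 2 * (γ 1 * x) = -(γ 1 * (γ 2 * x)) := fun x => hswap' 1 2 x (by decide)
  have w30 : ∀ x, γ 3 * (γ 0 * x) = -(γ 0 * (γ 3 * x)) := fun x => hswap' 0 3 x (by decide)
  have w31 : ∀ x, γ 3 * (γ 1 * x) = -(γ 1 * (γ 3 * x)) := fun x => hswap' 1 3 x (by decide)
  have w32 : ∀ x, γ 3 * (γ 2 * x) = -(γ 2 * (γ 3 * x)) := fun x => hswap' 2 3 x (by decide)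
  have w10' : γ 1 * γ 0 = -(γ 0 * γ 1) := hswap 0 1 (by decide)
  have w20' : γ 2 * γ 0 = -(γ 0 * γ 2) := hswap 0 2 (by decide)
  have w21' : γ 2 * γ 1 = -(γ 1 * γ 2) := hswap 1 2 (by decide)
  have w30' : γ 3 * γ 0 = -(γ 0 * γ 3) := hswap 0 3 (by decide)
  have w31' : γ 3 * γ 1 = -(γ 1 * γ 3) := hswap 1 3 (by decide)
  have w32' : γ 3 * γ 2 = -(γ 2 * γ 3) := hswap 2 3 (by decide)
  have hanti : ∀ i j : Fin 4, sigmaUp γ j i = -sigmaUp γ i j := by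
    intro i j
    rw [sigmaUp, sigmaUp, ← smul_neg, neg_sub]
  have hflip : ∀ (i j : Fin 4), (∑ μ, ∑ ν, sigmaUp γ μ ν * sigmaUp γ i j * sigmaLow γ μ ν =
      (-4 : ℂ) • sigmaUp γ i j) → ∑ μ, ∑ ν, sigmaUp γ μ ν * sigmaUp γ j i * sigmaLow γ μ ν =
      (-4 : ℂ) • sigmaUp γ j i := by
    intro i j h
    simp only [hanti i j, mul_neg, neg_mul, smul_neg, Finset.sum_neg_distrib, neg_inj]
    exact h
  have c00 : ∑ μ, ∑ ν, sigmaUp γ μ ν * sigmaUp γ 0 0 * sigmaLow γ μ ν =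
      (-4 : ℂ) • sigmaUp γ 0 0 := by
    simp only [Llow', Fin.sum_univ_four, sigmaUp]
    simp only [minkowski, Fin.isValue, reduceIte, show ((1:Fin 4) = 0) = False by simp,
      show ((2:Fin 4) = 0) = False by simp, show ((3:Fin 4) = 0) = False by simp]
    simp only [smul_smul, smul_sub, sub_mul, mul_sub, smul_mul_assoc, mul_smul_comm, mul_assoc,
      q0, q1, q2, q3, q0', q1', q2', q3', w10, w20, w21, w30, w31, w32,
      w10', w20', w21', w30', w31', w32', neg_mul, mul_neg, neg_neg, mul_one, one_mul,
      smul_neg, neg_smul, Complex.I_mul_I, div_mul_div_comm, sub_self, smul_zero, zero_smul,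
      mul_zero, zero_mul, add_zero, zero_add, sub_zero, zero_sub, neg_zero]
  have c01 : ∑ μ, ∑ ν, sigmaUp γ μ ν * sigmaUp γ 0 1 * sigmaLow γ μ ν =
      (-4 : ℂ) • sigmaUp γ 0 1 := by
    simp only [Llow', Fin.sum_univ_four, sigmaUp]
    simp only [minkowski, Fin.isValue, reduceIte, show ((1:Fin 4) = 0) = False by simp,
      show ((2:Fin 4) = 0) = False by simp, show ((3:Fin 4) = 0) = False by simp]
    simp only [smul_smul, smul_sub, sub_mul, mul_sub, smul_mul_assoc, mul_smul_comm, mul_assoc,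
      q0, q1, q2, q3, q0', q1', q2', q3', w10, w20, w21, w30, w31, w32,
      w10', w20', w21', w30', w31', w32', neg_mul, mul_neg, neg_neg, mul_one, one_mul,
      smul_neg, neg_smul, Complex.I_mul_I, div_mul_div_comm, sub_self, smul_zero, zero_smul,
      mul_zero, zero_mul, add_zero, zero_add, sub_zero, zero_sub, neg_zero]
    module
  have c02 : ∑ μ, ∑ ν, sigmaUp γ μ ν * sigmaUp γ 0 2 * sigmaLow γ μ ν =
      (-4 : ℂ) • sigmaUp γ 0 2 := by
    simp only [Llow', Fin.sum_univ_four, sigmaUp]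
    simp only [minkowski, Fin.isValue, reduceIte, show ((1:Fin 4) = 0) = False by simp,
      show ((2:Fin 4) = 0) = False by simp, show ((3:Fin 4) = 0) = False by simp]
    simp only [smul_smul, smul_sub, sub_mul, mul_sub, smul_mul_assoc, mul_smul_comm, mul_assoc,
      q0, q1, q2, q3, q0', q1', q2', q3', w10, w20, w21, w30, w31, w32,
      w10', w20', w21', w30', w31', w32', neg_mul, mul_neg, neg_neg, mul_one, one_mul,
      smul_neg, neg_smul, Complex.I_mul_I, div_mul_div_comm, sub_self, smul_zero, zero_smul,
      mul_zero, zero_mul, add_zero, zero_add, sub_zero, zero_sub, neg_zero]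
    module
  have c03 : ∑ μ, ∑ ν, sigmaUp γ μ ν * sigmaUp γ 0 3 * sigmaLow γ μ ν =
      (-4 : ℂ) • sigmaUp γ 0 3 := by
    simp only [Llow', Fin.sum_univ_four, sigmaUp]
    simp only [minkowski, Fin.isValue, reduceIte, show ((1:Fin 4) = 0) = False by simp,
      show ((2:Fin 4) = 0) = False by simp, show ((3:Fin 4) = 0) = False by simp]
    simp only [smul_smul, smul_sub, sub_mul, mul_sub, smul_mul_assoc, mul_smul_comm, mul_assoc,
      q0, q1, q2, q3, q0', q1', q2', q3', w10, w20, w21, w30, w31, w32,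
      w10', w20', w21', w30', w31', w32', neg_mul, mul_neg, neg_neg, mul_one, one_mul,
      smul_neg, neg_smul, Complex.I_mul_I, div_mul_div_comm, sub_self, smul_zero, zero_smul,
      mul_zero, zero_mul, add_zero, zero_add, sub_zero, zero_sub, neg_zero]
    module
  have c10 := hflip 0 1 c01
  have c11 : ∑ μ, ∑ ν, sigmaUp γ μ ν * sigmaUp γ 1 1 * sigmaLow γ μ ν =
      (-4 : ℂ) • sigmaUp γ 1 1 := by
    simp only [Llow', Fin.sum_univ_four, sigmaUp]
    simp only [minkowski, Fin.isValue, reduceIte, show ((1:Fin 4) = 0) = False by simp,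
      show ((2:Fin 4) = 0) = False by simp, show ((3:Fin 4) = 0) = False by simp]
    simp only [smul_smul, smul_sub, sub_mul, mul_sub, smul_mul_assoc, mul_smul_comm, mul_assoc,
      q0, q1, q2, q3, q0', q1', q2', q3', w10, w20, w21, w30, w31, w32,
      w10', w20', w21', w30', w31', w32', neg_mul, mul_neg, neg_neg, mul_one, one_mul,
      smul_neg, neg_smul, Complex.I_mul_I, div_mul_div_comm, sub_self, smul_zero, zero_smul,
      mul_zero, zero_mul, add_zero, zero_add, sub_zero, zero_sub, neg_zero]
  have c12 : ∑ μ, ∑ ν, sigmaUp γ μ ν * sigmaUp γ 1 2 * sigmaLow γ μ ν =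
      (-4 : ℂ) • sigmaUp γ 1 2 := by
    simp only [Llow', Fin.sum_univ_four, sigmaUp]
    simp only [minkowski, Fin.isValue, reduceIte, show ((1:Fin 4) = 0) = False by simp,
      show ((2:Fin 4) = 0) = False by simp, show ((3:Fin 4) = 0) = False by simp]
    simp only [smul_smul, smul_sub, sub_mul, mul_sub, smul_mul_assoc, mul_smul_comm, mul_assoc,
      q0, q1, q2, q3, q0', q1', q2', q3', w10, w20, w21, w30, w31, w32,
      w10', w20', w21', w30', w31', w32', neg_mul, mul_neg, neg_neg, mul_one, one_mul,
      smul_neg, neg_smul, Complex.I_mul_I, div_mul_div_comm, sub_self, smul_zero, zero_smul,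
      mul_zero, zero_mul, add_zero, zero_add, sub_zero, zero_sub, neg_zero]
    module
  have c13 : ∑ μ, ∑ ν, sigmaUp γ μ ν * sigmaUp γ 1 3 * sigmaLow γ μ ν =
      (-4 : ℂ) • sigmaUp γ 1 3 := by
    simp only [Llow', Fin.sum_univ_four, sigmaUp]
    simp only [minkowski, Fin.isValue, reduceIte, show ((1:Fin 4) = 0) = False by simp,
      show ((2:Fin 4) = 0) = False by simp, show ((3:Fin 4) = 0) = False by simp]
    simp only [smul_smul, smul_sub, sub_mul, mul_sub, smul_mul_assoc, mul_smul_comm, mul_assoc,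
      q0, q1, q2, q3, q0', q1', q2', q3', w10, w20, w21, w30, w31, w32,
      w10', w20', w21', w30', w31', w32', neg_mul, mul_neg, neg_neg, mul_one, one_mul,
      smul_neg, neg_smul, Complex.I_mul_I, div_mul_div_comm, sub_self, smul_zero, zero_smul,
      mul_zero, zero_mul, add_zero, zero_add, sub_zero, zero_sub, neg_zero]
    module
  have c20 := hflip 0 2 c02
  have c21 := hflip 1 2 c12
  have c22 : ∑ μ, ∑ ν, sigmaUp γ μ ν * sigmaUp γ 2 2 * sigmaLow γ μ ν =
      (-4 : ℂ) • sigmaUp γ 2 2 := by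
    simp only [Llow', Fin.sum_univ_four, sigmaUp]
    simp only [minkowski, Fin.isValue, reduceIte, show ((1:Fin 4) = 0) = False by simp,
      show ((2:Fin 4) = 0) = False by simp, show ((3:Fin 4) = 0) = False by simp]
    simp only [smul_smul, smul_sub, sub_mul, mul_sub, smul_mul_assoc, mul_smul_comm, mul_assoc,
      q0, q1, q2, q3, q0', q1', q2', q3', w10, w20, w21, w30, w31, w32,
      w10', w20', w21', w30', w31', w32', neg_mul, mul_neg, neg_neg, mul_one, one_mul,
      smul_neg, neg_smul, Complex.I_mul_I, div_mul_div_comm, sub_self, smul_zero, zero_smul,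
      mul_zero, zero_mul, add_zero, zero_add, sub_zero, zero_sub, neg_zero]
  have c23 : ∑ μ, ∑ ν, sigmaUp γ μ ν * sigmaUp γ 2 3 * sigmaLow γ μ ν =
      (-4 : ℂ) • sigmaUp γ 2 3 := by
    simp only [Llow', Fin.sum_univ_four, sigmaUp]
    simp only [minkowski, Fin.isValue, reduceIte, show ((1:Fin 4) = 0) = False by simp,
      show ((2:Fin 4) = 0) = False by simp, show ((3:Fin 4) = 0) = False by simp]
    simp only [smul_smul, smul_sub, sub_mul, mul_sub, smul_mul_assoc, mul_smul_comm, mul_assoc,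
      q0, q1, q2, q3, q0', q1', q2', q3', w10, w20, w21, w30, w31, w32,
      w10', w20', w21', w30', w31', w32', neg_mul, mul_neg, neg_neg, mul_one, one_mul,
      smul_neg, neg_smul, Complex.I_mul_I, div_mul_div_comm, sub_self, smul_zero, zero_smul,
      mul_zero, zero_mul, add_zero, zero_add, sub_zero, zero_sub, neg_zero]
    module
  have c30 := hflip 0 3 c03
  have c31 := hflip 1 3 c13
  have c32 := hflip 2 3 c23
  have c33 : ∑ μ, ∑ ν, sigmaUp γ μ ν * sigmaUp γ 3 3 * sigmaLow γ μ ν =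
      (-4 : ℂ) • sigmaUp γ 3 3 := by
    simp only [Llow', Fin.sum_univ_four, sigmaUp]
    simp only [minkowski, Fin.isValue, reduceIte, show ((1:Fin 4) = 0) = False by simp,
      show ((2:Fin 4) = 0) = False by simp, show ((3:Fin 4) = 0) = False by simp]
    simp only [smul_smul, smul_sub, sub_mul, mul_sub, smul_mul_assoc, mul_smul_comm, mul_assoc,
      q0, q1, q2, q3, q0', q1', q2', q3', w10, w20, w21, w30, w31, w32,
      w10', w20', w21', w30', w31', w32', neg_mul, mul_neg, neg_neg, mul_one, one_mul,
      smul_neg, neg_smul, Complex.I_mul_I, div_mul_div_comm, sub_self, smul_zero, zero_smul,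
      mul_zero, zero_mul, add_zero, zero_add, sub_zero, zero_sub, neg_zero]
  intro lam ρ
  have hfour : ∀ l : Fin 4, l = 0 ∨ l = 1 ∨ l = 2 ∨ l = 3 := by decide
  rcases hfour lam with rfl|rfl|rfl|rfl <;> rcases hfour ρ with rfl|rfl|rfl|rfl
  exacts [c00, c01, c02, c03, c10, c11, c12, c13, c20, c21, c22, c23, c30, c31, c32, c33]
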